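/- (Heisenberg–Weyl twirl of a product map.) Let p be an odd prime and let A, B, M be p×p complex matrices. Then (1/p²) ∑_{a,b ∈ ℤ/pℤ} (X^aZ^b)† A (X^aZ^b) · M · (X^aZ^b)† B (X^aZ^b) = ∑_{a,b ∈ ℤ/pℤ} r(a,b) · (X^aZ^b) M (X^aZ^b)†, where r(a,b) = Tr((X^aZ^b)† A) · Tr((X^aZ^b) B) / p². In particular r(0,0) = Tr(A)Tr(B)/p² and ∑_{a,b} r(a,b) = Tr(AB)/p. -/

import Mathlib

open scoped Matrix BigOperators

/-- The Heisenberg–Weyl shift matrix `X` on `ℂ^p`: `X|k⟩ = |k+1⟩`. -/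
def HWX (p : ℕ) : Matrix (ZMod p) (ZMod p) ℂ :=
  Matrix.of fun x y => if x = y + 1 then 1 else 0

/-- The Heisenberg–Weyl clock matrix `Z` on `ℂ^p`: `Z|k⟩ = ω^k |k⟩` with
`ω = exp(2πi/p)`. -/
noncomputable def HWZ (p : ℕ) [NeZero p] : Matrix (ZMod p) (ZMod p) ℂ :=
  Matrix.diagonal fun k => Complex.exp (2 * Real.pi * Complex.I / p) ^ (k : ZMod p).val

/-- The Heisenberg–Weyl unitary `W(a,b) = X^a Z^b` for `a, b ∈ ℤ/p`. -/
noncomputable def HWW (p : ℕ) [NeZero p] (a b : ZMod p) : Matrix (ZMod p) (ZMod p) ℂ :=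
  HWX p ^ a.val * HWZ p ^ b.val

/-- The twirl coefficient `r(a,b) = Tr((X^aZ^b)† A) · Tr((X^aZ^b) B) / p²`. -/
noncomputable def hwCoeff (p : ℕ) [NeZero p] (A B : Matrix (ZMod p) (ZMod p) ℂ)
    (a b : ZMod p) : ℂ :=
  ((HWW p a b)ᴴ * A).trace * ((HWW p a b) * B).trace / (p : ℂ) ^ 2

section Helpers

variable (p : ℕ) [Fact p.Prime]

/-- The character `χ(k) = ω^{k.val}`. -/
noncomputable def hwchi (k : ZMod p) : ℂ :=
  Complex.exp (2 * Real.pi * Complex.I / p) ^ k.val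

lemma hwomega_prim : IsPrimitiveRoot (Complex.exp (2 * Real.pi * Complex.I / p)) p :=
  Complex.isPrimitiveRoot_exp p (NeZero.ne p)

lemma hwomega_pow_p : Complex.exp (2 * Real.pi * Complex.I / p) ^ p = 1 :=
  (hwomega_prim p).pow_eq_one

lemma hwomega_pow_mod (n : ℕ) :
    Complex.exp (2 * Real.pi * Complex.I / p) ^ n
      = Complex.exp (2 * Real.pi * Complex.I / p) ^ (n % p) := by
  conv_lhs => rw [← Nat.div_add_mod n p]
  rw [pow_add, pow_mul, hwomega_pow_p, one_pow, one_mul]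

lemma hwchi_add (j k : ZMod p) : hwchi p (j + k) = hwchi p j * hwchi p k := by
  rw [hwchi, hwchi, hwchi, ZMod.val_add, ← hwomega_pow_mod, pow_add]

lemma hwchi_zero : hwchi p 0 = 1 := by simp [hwchi]

lemma hwchi_abs (k : ZMod p) : ‖hwchi p k‖ = 1 := by
  rw [hwchi, norm_pow]
  have h : ‖Complex.exp (2 * Real.pi * Complex.I / ↑p)‖ = 1 := by
    rw [Complex.norm_exp]
    have h0 : (2 * Real.pi * Complex.I / ↑p).re = 0 := by
      simp [Complex.div_re, Complex.mul_re]
    rw [h0, Real.exp_zero]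
  rw [h, one_pow]

lemma hwchi_conj (k : ZMod p) : (starRingEnd ℂ) (hwchi p k) = hwchi p (-k) := by
  have h1 : hwchi p (-k) * hwchi p k = 1 := by rw [← hwchi_add, neg_add_cancel, hwchi_zero]
  have h2 : hwchi p (-k) = (hwchi p k)⁻¹ := eq_inv_of_mul_eq_one_left h1
  rw [h2, Complex.inv_def, Complex.normSq_eq_norm_sq, hwchi_abs]
  simp

lemma hwchi_sum_univ : ∑ c : ZMod p, hwchi p c = 0 := by
  have h2 : ∑ c : ZMod p, hwchi p c
      = ∑ k ∈ Finset.range p, Complex.exp (2 * Real.pi * Complex.I / p) ^ k := by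
    refine Finset.sum_nbij' (fun c => c.val) (fun k => (k : ZMod p)) ?_ ?_ ?_ ?_ ?_
    · intro c _; exact Finset.mem_range.mpr (ZMod.val_lt c)
    · intro k _; exact Finset.mem_univ _
    · intro c _; exact ZMod.natCast_rightInverse c
    · intro k hk; exact ZMod.val_natCast_of_lt (Finset.mem_range.mp hk)
    · intro c _; rfl
  rw [h2, (hwomega_prim p).geom_sum_eq_zero (Fact.out (p := p.Prime)).one_lt]

lemma hwchi_sum (t : ZMod p) :
    ∑ b : ZMod p, hwchi p (b * t) = if t = 0 then (p : ℂ) else 0 := by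
  split_ifs with ht
  · subst ht; simp [hwchi, Finset.card_univ]
  · rw [Fintype.sum_bijective (fun b => b * t) (mulRight_bijective₀ t ht) _ _ (fun _ => rfl),
      hwchi_sum_univ]

lemma HWX_pow_apply (n : ℕ) (x y : ZMod p) :
    ((HWX p) ^ n) x y = if x = y + (n : ZMod p) then 1 else 0 := by
  induction n generalizing y with
  | zero => simp [Matrix.one_apply, eq_comm]
  | succ n ih =>
    rw [pow_succ, Matrix.mul_apply]
    rw [Finset.sum_eq_single (y + 1)]
    · rw [ih (y + 1)]
      have h1 : (HWX p) (y + 1) y = 1 := by simp [HWX]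
      have hc : y + 1 + (n : ZMod p) = y + ((n + 1 : ℕ) : ZMod p) := by push_cast; ring
      rw [h1, mul_one, hc]
    · intro k _ hk
      have h0 : (HWX p) k y = 0 := by
        simp only [HWX, Matrix.of_apply]; rw [if_neg]; exact fun h => hk h
      rw [h0, mul_zero]
    · intro h; exact absurd (Finset.mem_univ _) h

lemma HWZ_pow_apply (n : ℕ) :
    (HWZ p) ^ n = Matrix.diagonal fun k : ZMod p =>
      Complex.exp (2 * Real.pi * Complex.I / p) ^ (n * k.val) := by
  rw [HWZ, Matrix.diagonal_pow]
  ext i j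
  by_cases h : i = j <;> simp [Matrix.diagonal_apply, h, ← pow_mul, mul_comm]

lemma HWW_apply (a b x y : ZMod p) :
    HWW p a b x y = if x = y + a then hwchi p (b * y) else 0 := by
  rw [HWW, Matrix.mul_apply, HWZ_pow_apply]
  simp only [Matrix.diagonal_apply, HWX_pow_apply]
  rw [Finset.sum_eq_single y]
  · have h : hwchi p (b * y) = Complex.exp (2 * Real.pi * Complex.I / p) ^ (b.val * y.val) := by
      rw [hwchi, ZMod.val_mul, ← hwomega_pow_mod]
    rw [h, ZMod.natCast_rightInverse a]
    simp
  · intro k _ hk; simp [hk]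
  · intro h; exact absurd (Finset.mem_univ _) h

lemma HWW_conjTranspose_apply (a b x y : ZMod p) :
    (HWW p a b)ᴴ x y = if y = x + a then hwchi p (-(b * x)) else 0 := by
  rw [Matrix.conjTranspose_apply, HWW_apply]
  by_cases h : y = x + a
  · rw [if_pos h, if_pos h, ← hwchi_conj]; rfl
  · rw [if_neg h, if_neg h, star_zero]

/-- Conjugation: `(Wᴴ C W)_{x,y} = χ(b(y-x)) C_{x+a, y+a}`. -/
lemma hw_conj_apply (a b : ZMod p) (C : Matrix (ZMod p) (ZMod p) ℂ) (x y : ZMod p) :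
    ((HWW p a b)ᴴ * C * HWW p a b) x y = hwchi p (b * (y - x)) * C (x + a) (y + a) := by
  rw [Matrix.mul_apply]
  rw [Finset.sum_eq_single (y + a)]
  · rw [Matrix.mul_apply, Finset.sum_eq_single (x + a)]
    · rw [HWW_conjTranspose_apply, HWW_apply, if_pos rfl, if_pos rfl]
      rw [show b * (y - x) = -(b * x) + b * y by ring, hwchi_add]
      ring
    · intro k _ hk
      rw [HWW_conjTranspose_apply, if_neg (fun h => hk h), zero_mul]
    · intro h; exact absurd (Finset.mem_univ _) h
  · intro k _ hk
    rw [HWW_apply, if_neg (fun h => hk h), mul_zero]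
  · intro h; exact absurd (Finset.mem_univ _) h

/-- Unconjugation: `(W M Wᴴ)_{x,y} = χ(b(x-y)) M_{x-a, y-a}`. -/
lemma hw_unconj_apply (a b : ZMod p) (M : Matrix (ZMod p) (ZMod p) ℂ) (x y : ZMod p) :
    (HWW p a b * M * (HWW p a b)ᴴ) x y = hwchi p (b * (x - y)) * M (x - a) (y - a) := by
  rw [Matrix.mul_apply]
  rw [Finset.sum_eq_single (y - a)]
  · rw [Matrix.mul_apply, Finset.sum_eq_single (x - a)]
    · rw [HWW_apply, HWW_conjTranspose_apply, if_pos (by ring), if_pos (by ring)]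
      rw [show b * (x - y) = b * (x - a) + -(b * (y - a)) by ring, hwchi_add]
      ring
    · intro k _ hk
      rw [HWW_apply, if_neg (fun h => hk (by rw [h]; ring)), zero_mul]
    · intro h; exact absurd (Finset.mem_univ _) h
  · intro k _ hk
    rw [HWW_conjTranspose_apply, if_neg (fun h => hk (by rw [h]; ring)), mul_zero]
  · intro h; exact absurd (Finset.mem_univ _) h

lemma hw_traceA (a b : ZMod p) (A : Matrix (ZMod p) (ZMod p) ℂ) :
    ((HWW p a b)ᴴ * A).trace = ∑ s : ZMod p, hwchi p (-(b * s)) * A (s + a) s := by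
  rw [Matrix.trace]
  refine Finset.sum_congr rfl fun s _ => ?_
  rw [Matrix.diag, Matrix.mul_apply, Finset.sum_eq_single (s + a)]
  · rw [HWW_conjTranspose_apply, if_pos rfl]
  · intro k _ hk
    rw [HWW_conjTranspose_apply, if_neg (fun h => hk h), zero_mul]
  · intro h; exact absurd (Finset.mem_univ _) h

lemma hw_traceB (a b : ZMod p) (B : Matrix (ZMod p) (ZMod p) ℂ) :
    ((HWW p a b) * B).trace = ∑ t : ZMod p, hwchi p (b * t) * B t (t + a) := by
  rw [Matrix.trace]
  have h1 : ∀ x : ZMod p, ((HWW p a b) * B).diag x = hwchi p (b * (x - a)) * B (x - a) x := by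
    intro x
    rw [Matrix.diag, Matrix.mul_apply, Finset.sum_eq_single (x - a)]
    · rw [HWW_apply, if_pos (by ring)]
    · intro k _ hk
      rw [HWW_apply, if_neg (fun h => hk (by rw [h]; ring)), zero_mul]
    · intro h; exact absurd (Finset.mem_univ _) h
  simp only [h1]
  refine Fintype.sum_equiv (Equiv.addRight a).symm _ _ fun t => ?_
  simp [sub_eq_add_neg]

end Helpers

section KeySums

variable (p : ℕ) [Fact p.Prime] (A B M : Matrix (ZMod p) (ZMod p) ℂ)

lemma hw_key_sum_L (a x y : ZMod p) :
    ∑ b : ZMod p,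
        (((HWW p a b)ᴴ * A * HWW p a b) * M * ((HWW p a b)ᴴ * B * HWW p a b)) x y
      = (p : ℂ) * ∑ u : ZMod p,
          A (x + a) (u + a) * M u (u + y - x) * B (u + y - x + a) (y + a) := by
  have h1 : ∀ b : ZMod p,
      (((HWW p a b)ᴴ * A * HWW p a b) * M * ((HWW p a b)ᴴ * B * HWW p a b)) x y
        = ∑ v : ZMod p, ∑ u : ZMod p,
            hwchi p (b * (u - x + (y - v))) *
              (A (x + a) (u + a) * M u v * B (v + a) (y + a)) := by
    intro b
    rw [Matrix.mul_apply]
    refine Finset.sum_congr rfl fun v _ => ?_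
    rw [Matrix.mul_apply, Finset.sum_mul]
    refine Finset.sum_congr rfl fun u _ => ?_
    rw [hw_conj_apply, hw_conj_apply,
      show b * (u - x + (y - v)) = b * (u - x) + b * (y - v) by ring, hwchi_add]
    ring
  simp only [h1]
  rw [Finset.sum_comm]
  have h2 : ∀ v : ZMod p,
      ∑ b : ZMod p, ∑ u : ZMod p,
          hwchi p (b * (u - x + (y - v))) *
            (A (x + a) (u + a) * M u v * B (v + a) (y + a))
        = ∑ u : ZMod p,
            (if v = u + y - x then (p : ℂ) else 0) *
              (A (x + a) (u + a) * M u v * B (v + a) (y + a)) := by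
    intro v
    rw [Finset.sum_comm]
    refine Finset.sum_congr rfl fun u _ => ?_
    rw [← Finset.sum_mul, hwchi_sum]
    congr 1
    have hc : (u - x + (y - v) = 0) = (v = u + y - x) := by
      apply propext; constructor <;> intro h <;> linear_combination -h
    simp only [hc]
  simp only [h2]
  rw [Finset.sum_comm, Finset.mul_sum]
  refine Finset.sum_congr rfl fun u _ => ?_
  have h3 : ∀ v : ZMod p,
      (if v = u + y - x then (p : ℂ) else 0) *
          (A (x + a) (u + a) * M u v * B (v + a) (y + a))
        = if v = u + y - x then
            (p : ℂ) * (A (x + a) (u + a) * M u v * B (v + a) (y + a)) else 0 := by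
    intro v; split_ifs <;> simp
  simp only [h3]
  rw [Finset.sum_ite_eq' Finset.univ (u + y - x)
    (fun v => (p : ℂ) * (A (x + a) (u + a) * M u v * B (v + a) (y + a))),
    if_pos (Finset.mem_univ _)]

lemma hw_key_sum_R (a x y : ZMod p) :
    ∑ b : ZMod p, hwCoeff p A B a b * ((HWW p a b * M * (HWW p a b)ᴴ) x y)
      = (p : ℂ) * (∑ s : ZMod p,
          A (s + a) s * B (s + y - x) (s + y - x + a) * M (x - a) (y - a)) / (p : ℂ) ^ 2 := by
  have h1 : ∀ b : ZMod p,
      hwCoeff p A B a b * ((HWW p a b * M * (HWW p a b)ᴴ) x y)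
        = ∑ s : ZMod p, ∑ t : ZMod p,
            hwchi p (b * (t - s + (x - y))) *
              (A (s + a) s * B t (t + a) * M (x - a) (y - a)) / (p : ℂ) ^ 2 := by
    intro b
    rw [hwCoeff, hw_traceA, hw_traceB, hw_unconj_apply, Finset.sum_mul_sum]
    rw [Finset.sum_div, Finset.sum_mul]
    refine Finset.sum_congr rfl fun s _ => ?_
    rw [Finset.sum_div, Finset.sum_mul]
    refine Finset.sum_congr rfl fun t _ => ?_
    rw [show b * (t - s + (x - y)) = -(b * s) + (b * t + b * (x - y)) by ring,
      hwchi_add, hwchi_add]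
    ring
  simp only [h1]
  rw [Finset.sum_comm]
  have h2 : ∀ s : ZMod p,
      ∑ b : ZMod p, ∑ t : ZMod p,
          hwchi p (b * (t - s + (x - y))) *
            (A (s + a) s * B t (t + a) * M (x - a) (y - a)) / (p : ℂ) ^ 2
        = ∑ t : ZMod p,
            (if t = s + y - x then (p : ℂ) else 0) *
              (A (s + a) s * B t (t + a) * M (x - a) (y - a)) / (p : ℂ) ^ 2 := by
    intro s
    rw [Finset.sum_comm]
    refine Finset.sum_congr rfl fun t _ => ?_
    simp only [div_eq_mul_inv]
    rw [← Finset.sum_mul, ← Finset.sum_mul, hwchi_sum]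
    have hc : (t - s + (x - y) = 0) = (t = s + y - x) := by
      apply propext; constructor <;> intro h <;> linear_combination h
    simp only [hc]
  simp only [h2]
  have h3 : ∀ s t : ZMod p,
      (if t = s + y - x then (p : ℂ) else 0) *
          (A (s + a) s * B t (t + a) * M (x - a) (y - a)) / (p : ℂ) ^ 2
        = if t = s + y - x then
            (p : ℂ) * (A (s + a) s * B t (t + a) * M (x - a) (y - a)) / (p : ℂ) ^ 2
          else 0 := by
    intro s t; split_ifs <;> simp
  simp only [h3]
  have h4 : ∀ s : ZMod p,
      ∑ t : ZMod p, (if t = s + y - x then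
          (p : ℂ) * (A (s + a) s * B t (t + a) * M (x - a) (y - a)) / (p : ℂ) ^ 2 else 0)
        = (p : ℂ) * (A (s + a) s * B (s + y - x) (s + y - x + a) * M (x - a) (y - a))
            / (p : ℂ) ^ 2 := by
    intro s
    rw [Finset.sum_ite_eq' Finset.univ (s + y - x), if_pos (Finset.mem_univ _)]
  simp only [h4]
  rw [Finset.mul_sum, Finset.sum_div]

lemma hw_reindex (x y : ZMod p) :
    ∑ a : ZMod p, ∑ u : ZMod p,
        A (x + a) (u + a) * M u (u + y - x) * B (u + y - x + a) (y + a)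
      = ∑ a : ZMod p, ∑ s : ZMod p,
          A (s + a) s * B (s + y - x) (s + y - x + a) * M (x - a) (y - a) := by
  rw [← Finset.sum_product', ← Finset.sum_product']
  refine Finset.sum_nbij' (fun q => (x - q.2, q.2 + q.1)) (fun q => (q.2 - x + q.1, x - q.1))
    ?_ ?_ ?_ ?_ ?_
  · intro q _; exact Finset.mem_univ _
  · intro q _; exact Finset.mem_univ _
  · intro q _; ext <;> simp
  · intro q _; ext <;> simp
  · rintro ⟨a, u⟩ _
    show A (x + a) (u + a) * M u (u + y - x) * B (u + y - x + a) (y + a)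
      = A (u + a + (x - u)) (u + a) * B (u + a + y - x) (u + a + y - x + (x - u)) *
        M (x - (x - u)) (y - (x - u))
    rw [show u + a + (x - u) = x + a by ring, show u + a + y - x + (x - u) = y + a by ring,
      show u + a + y - x = u + y - x + a by ring, show x - (x - u) = u by ring,
      show y - (x - u) = u + y - x by ring]
    ring

end KeySums

/-- Heisenberg–Weyl twirl of a product map. -/
theorem hw_twirl_product_map (p : ℕ) [Fact p.Prime] (hodd : Odd p)
    (A B M : Matrix (ZMod p) (ZMod p) ℂ) :
    ((1 : ℂ) / (p : ℂ) ^ 2) •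
        ∑ a : ZMod p, ∑ b : ZMod p,
          ((HWW p a b)ᴴ * A * HWW p a b) * M * ((HWW p a b)ᴴ * B * HWW p a b) =
      ∑ a : ZMod p, ∑ b : ZMod p, hwCoeff p A B a b • (HWW p a b * M * (HWW p a b)ᴴ) ∧
    hwCoeff p A B 0 0 = A.trace * B.trace / (p : ℂ) ^ 2 ∧
    ∑ a : ZMod p, ∑ b : ZMod p, hwCoeff p A B a b = (A * B).trace / (p : ℂ) := by
  have hp0 : (p : ℂ) ≠ 0 := by
    exact_mod_cast Nat.cast_ne_zero.mpr (Fact.out (p := p.Prime)).ne_zero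
  refine ⟨?_, ?_, ?_⟩
  · ext x y
    simp only [Matrix.smul_apply, Matrix.sum_apply, smul_eq_mul]
    calc (1 : ℂ) / (p : ℂ) ^ 2 *
          ∑ a : ZMod p, ∑ b : ZMod p,
            (((HWW p a b)ᴴ * A * HWW p a b) * M * ((HWW p a b)ᴴ * B * HWW p a b)) x y
        = (1 : ℂ) / (p : ℂ) ^ 2 *
            ∑ a : ZMod p, (p : ℂ) * ∑ u : ZMod p,
              A (x + a) (u + a) * M u (u + y - x) * B (u + y - x + a) (y + a) := by
          rw [Finset.sum_congr rfl fun a _ => hw_key_sum_L p A B M a x y]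
      _ = ∑ a : ZMod p, (p : ℂ) * (∑ s : ZMod p,
              A (s + a) s * B (s + y - x) (s + y - x + a) * M (x - a) (y - a)) / (p : ℂ) ^ 2 := by
          rw [← Finset.mul_sum, hw_reindex p A B M x y, ← Finset.sum_div, ← Finset.mul_sum]
          ring
      _ = ∑ a : ZMod p, ∑ b : ZMod p,
            hwCoeff p A B a b * ((HWW p a b * M * (HWW p a b)ᴴ) x y) := by
          rw [Finset.sum_congr rfl fun a _ => (hw_key_sum_R p A B M a x y).symm]
  · rw [hwCoeff]
    have h0 : HWW p 0 0 = 1 := by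
      rw [HWW, ZMod.val_zero, pow_zero, pow_zero, one_mul]
    rw [h0]
    simp
  · have h1 : ∀ a b : ZMod p, hwCoeff p A B a b
        = ∑ s : ZMod p, ∑ t : ZMod p,
            hwchi p (b * (t - s)) * (A (s + a) s * B t (t + a)) / (p : ℂ) ^ 2 := by
      intro a b
      rw [hwCoeff, hw_traceA, hw_traceB, Finset.sum_mul_sum, Finset.sum_div]
      refine Finset.sum_congr rfl fun s _ => ?_
      rw [Finset.sum_div]
      refine Finset.sum_congr rfl fun t _ => ?_
      rw [show b * (t - s) = -(b * s) + b * t by ring, hwchi_add]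
      ring
    simp only [h1]
    have h2 : ∀ a s : ZMod p,
        ∑ b : ZMod p, ∑ t : ZMod p,
            hwchi p (b * (t - s)) * (A (s + a) s * B t (t + a)) / (p : ℂ) ^ 2
          = (p : ℂ) * (A (s + a) s * B s (s + a)) / (p : ℂ) ^ 2 := by
      intro a s
      rw [Finset.sum_comm]
      have h3 : ∀ t : ZMod p,
          ∑ b : ZMod p, hwchi p (b * (t - s)) * (A (s + a) s * B t (t + a)) / (p : ℂ) ^ 2
            = if t = s then (p : ℂ) * (A (s + a) s * B t (t + a)) / (p : ℂ) ^ 2 else 0 := by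
        intro t
        simp only [div_eq_mul_inv]
        rw [← Finset.sum_mul, ← Finset.sum_mul, hwchi_sum]
        have hc : (t - s = 0) = (t = s) := by
          apply propext; constructor <;> intro h <;> linear_combination h
        simp only [hc]
        split_ifs <;> simp
      simp only [h3]
      rw [Finset.sum_ite_eq' Finset.univ s, if_pos (Finset.mem_univ _)]
    have hswap : ∀ a : ZMod p,
        ∑ b : ZMod p, ∑ s : ZMod p, ∑ t : ZMod p,
            hwchi p (b * (t - s)) * (A (s + a) s * B t (t + a)) / (p : ℂ) ^ 2
          = ∑ s : ZMod p, (p : ℂ) * (A (s + a) s * B s (s + a)) / (p : ℂ) ^ 2 := by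
      intro a
      rw [Finset.sum_comm]
      exact Finset.sum_congr rfl fun s _ => h2 a s
    simp only [hswap]
    have h4 : ∑ a : ZMod p, ∑ s : ZMod p, (p : ℂ) * (A (s + a) s * B s (s + a)) / (p : ℂ) ^ 2
        = (∑ a : ZMod p, ∑ s : ZMod p, A (s + a) s * B s (s + a)) / (p : ℂ) := by
      rw [Finset.sum_div]
      refine Finset.sum_congr rfl fun a _ => ?_
      rw [Finset.sum_div]
      refine Finset.sum_congr rfl fun s _ => ?_
      field_simp
    rw [h4]
    congr 1
    have htr : (A * B).trace = ∑ s : ZMod p, ∑ x : ZMod p, A x s * B s x := by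
      rw [Matrix.trace]
      simp only [Matrix.diag, Matrix.mul_apply]
      rw [Finset.sum_comm]
    rw [htr, Finset.sum_comm]
    refine Finset.sum_congr rfl fun s _ => ?_
    exact Fintype.sum_equiv (Equiv.addLeft s) _ _ fun a => rfl
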